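/- Let n ≥ 1 and s ≥ 1 be natural numbers, let R and Σ be symmetric positive definite s×s real matrices, let G be an s×n real matrix, and let H = I_n − (1/n)·J_n. Then Σ⁻¹·G·Gᵀ − Σ⁻¹·((n·R)⁻¹ + Σ⁻¹)⁻¹·Σ⁻¹·G·((1/n)·J_n)·Gᵀ = (Σ + n·R)⁻¹·G·Gᵀ + ((1/n)·Σ·R⁻¹·Σ + Σ)⁻¹·G·H·Gᵀ, as an equality of s×s matrices. -/

import Mathlib

open Matrix

theorem stmt14 (n s : ℕ) (hn : 1 ≤ n) (hs : 1 ≤ s)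
    (R Sig : Matrix (Fin s) (Fin s) ℝ) (hR : R.PosDef) (hSig : Sig.PosDef)
    (G : Matrix (Fin s) (Fin n) ℝ) :
    let J : Matrix (Fin n) (Fin n) ℝ := Matrix.of fun _ _ => 1
    let H : Matrix (Fin n) (Fin n) ℝ := 1 - (1 / (n : ℝ)) • J
    Sig⁻¹ * (G * Gᵀ)
        - Sig⁻¹ * (((n : ℝ) • R)⁻¹ + Sig⁻¹)⁻¹ * Sig⁻¹ * (G * ((1 / (n : ℝ)) • J) * Gᵀ)
      = (Sig + (n : ℝ) • R)⁻¹ * (G * Gᵀ)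
        + ((1 / (n : ℝ)) • (Sig * R⁻¹ * Sig) + Sig)⁻¹ * (G * H * Gᵀ) := by
  intro J H
  have hn0 : (0:ℝ) < (n:ℝ) := by exact_mod_cast hn
  -- M := n • R is positive definite
  have hM : ((n : ℝ) • R).PosDef := by
    refine ⟨?_, fun x hx => ?_⟩
    · unfold Matrix.IsHermitian
      rw [conjTranspose_smul]
      simp only [Matrix.conjTranspose_eq_transpose_of_trivial]
      congr 1
      ext i j
      exact congrFun (congrFun hR.1 i) j
    · have := hR.2 hx
      have h2 : (x.sum fun i xi => x.sum fun j xj => star xi * ((n:ℝ) • R) i j * xj)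
          = (n:ℝ) * (x.sum fun i xi => x.sum fun j xj => star xi * R i j * xj) := by
        simp only [Finsupp.sum, Finset.mul_sum, Matrix.smul_apply, smul_eq_mul]
        exact Finset.sum_congr rfl fun i _ => Finset.sum_congr rfl fun j _ => by ring
      rw [h2]
      exact mul_pos hn0 this
  set M : Matrix (Fin s) (Fin s) ℝ := (n : ℝ) • R with hMdef
  have hK : (M⁻¹ + Sig⁻¹).PosDef := hM.inv.add hSig.inv
  set K : Matrix (Fin s) (Fin s) ℝ := M⁻¹ + Sig⁻¹ with hKdef
  have hSu : IsUnit Sig.det := isUnit_iff_isUnit_det _ |>.1 hSig.isUnit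
  have hMu : IsUnit M.det := isUnit_iff_isUnit_det _ |>.1 hM.isUnit
  have hKu : IsUnit K.det := isUnit_iff_isUnit_det _ |>.1 hK.isUnit
  have hSS : Sig * Sig⁻¹ = 1 := mul_nonsing_inv _ hSu
  have hSS' : Sig⁻¹ * Sig = 1 := nonsing_inv_mul _ hSu
  have hKK : K * K⁻¹ = 1 := mul_nonsing_inv _ hKu
  have hMM : M * M⁻¹ = 1 := mul_nonsing_inv _ hMu
  -- M⁻¹ = (1/n) • R⁻¹
  have hMinv : M⁻¹ = (1 / (n:ℝ)) • R⁻¹ := by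
    apply inv_eq_right_inv
    rw [hMdef, smul_mul_smul_comm]
    rw [mul_nonsing_inv _ (isUnit_iff_isUnit_det _ |>.1 hR.isUnit)]
    rw [mul_one_div_cancel hn0.ne', one_smul]
  -- the second inverse base equals Sig * K * Sig
  have hCbase : (1 / (n : ℝ)) • (Sig * R⁻¹ * Sig) + Sig = Sig * K * Sig := by
    rw [hKdef, hMinv]
    have : Sig * ((1 / (n:ℝ)) • R⁻¹ + Sig⁻¹) * Sig
        = (1 / (n:ℝ)) • (Sig * R⁻¹ * Sig) + Sig * Sig⁻¹ * Sig := by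
      rw [Matrix.mul_add, Matrix.add_mul]
      congr 1
      rw [Matrix.mul_smul, Matrix.smul_mul]
    rw [this, hSS, Matrix.one_mul]
  have hC : ((1 / (n : ℝ)) • (Sig * R⁻¹ * Sig) + Sig)⁻¹ = Sig⁻¹ * K⁻¹ * Sig⁻¹ := by
    rw [hCbase, Matrix.mul_inv_rev, Matrix.mul_inv_rev, Matrix.mul_assoc]
  -- Woodbury : (Sig + M)⁻¹ = Sig⁻¹ - Sig⁻¹ K⁻¹ Sig⁻¹
  have hW : (Sig + M)⁻¹ = Sig⁻¹ - Sig⁻¹ * K⁻¹ * Sig⁻¹ := by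
    apply inv_eq_right_inv
    have expand : (Sig + M) * (Sig⁻¹ - Sig⁻¹ * K⁻¹ * Sig⁻¹)
        = 1 + M * Sig⁻¹ - (1 + M * Sig⁻¹) * K⁻¹ * Sig⁻¹ := by
      rw [Matrix.mul_sub, Matrix.add_mul, hSS]
      rw [← Matrix.mul_assoc, ← Matrix.mul_assoc, Matrix.add_mul, hSS]
    rw [expand]
    have h1 : 1 + M * Sig⁻¹ = M * K := by
      rw [hKdef, Matrix.mul_add, hMM]
    rw [h1, Matrix.mul_assoc M K K⁻¹, hKK, Matrix.mul_one, hKdef, Matrix.mul_add, hMM]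
    abel
  -- final assembly
  have hH : G * H * Gᵀ = G * Gᵀ - G * ((1 / (n:ℝ)) • J) * Gᵀ := by
    show G * (1 - (1 / (n : ℝ)) • J) * Gᵀ = _
    rw [Matrix.mul_sub, Matrix.mul_one, Matrix.sub_mul]
  rw [hC, hW, hH]
  rw [Matrix.sub_mul, Matrix.mul_sub]
  abel
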